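/- For any topological space $X$, the evaluation map $\pi: PX \to X \times X$, $\pi(\gamma) = (\gamma(0), \gamma(1))$, is a $\mathbb{Z}/2$-fibration, where $\mathbb{Z}/2$ acts on $PX$ by path reversal $\gamma \mapsto \bar\gamma$ (with $\bar\gamma(t) = \gamma(1-t)$) and on $X \times X$ by transposition of factors. -/

import Mathlib

open unitInterval Set

noncomputable section

/-- The space of paths in `X`: continuous maps from the unit interval. -/
abbrev PathSp (X : Type*) [TopologicalSpace X] := C(I, X)

/-- Path reversal, the `ℤ/2`-action on the path space. -/
def pathRev {X : Type*} [TopologicalSpace X] (γ : PathSp X) : PathSp X :=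
  γ.comp ⟨unitInterval.symm, unitInterval.continuous_symm⟩

/-- The evaluation map `π : PX → X × X`, `γ ↦ (γ 0, γ 1)`. -/
def evalMap (X : Type*) [TopologicalSpace X] : PathSp X → X × X :=
  fun γ => (γ 0, γ 1)

/-- `σ` is a local section of the evaluation map on `U ⊆ X × X` which is equivariant
with respect to transposition and path reversal. -/
def IsSymSection {X : Type*} [TopologicalSpace X] (U : Set (X × X))
    (sec : C(U, PathSp X)) : Prop :=
  (∀ u : U, sec u 0 = (u : X × X).1 ∧ sec u 1 = (u : X × X).2) ∧
  (∀ (u : U) (hs : Prod.swap (u : X × X) ∈ U) (t : I),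
      sec ⟨Prod.swap (u : X × X), hs⟩ t = sec u (unitInterval.symm t))

/-- `TCΣ(X) ≤ k` : there is a cover of `X × X` by `k+1` invariant open sets,
each admitting an equivariant local section of the evaluation map. -/
def TCSigma_le (X : Type*) [TopologicalSpace X] (k : ℕ) : Prop :=
  ∃ U : Fin (k + 1) → Set (X × X),
    (∀ i, IsOpen (U i)) ∧
    (∀ i, ∀ p ∈ U i, Prod.swap p ∈ U i) ∧
    (⋃ i, U i) = Set.univ ∧
    (∀ i, ∃ sec : C(U i, PathSp X), IsSymSection (U i) sec)

/-- The symmetrized topological complexity, as an extended natural number. -/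
def TCSigma (X : Type*) [TopologicalSpace X] : ℕ∞ :=
  sInf {n : ℕ∞ | ∃ k : ℕ, n = k ∧ TCSigma_le X k}

/-- `TC^{M,Σ}(X) ≤ k`: as for `TCΣ` but each set of the cover contains the diagonal and the
sections are constant on the diagonal. -/
def TCMSigma_le (X : Type*) [TopologicalSpace X] (k : ℕ) : Prop :=
  ∃ U : Fin (k + 1) → Set (X × X),
    (∀ i, IsOpen (U i)) ∧
    (∀ i, ∀ p ∈ U i, Prod.swap p ∈ U i) ∧
    (∀ i (x : X), (x, x) ∈ U i) ∧
    (⋃ i, U i) = Set.univ ∧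
    (∀ i, ∃ sec : C(U i, PathSp X), IsSymSection (U i) sec ∧
      ∀ (x : X) (h : (x, x) ∈ U i) (t : I), sec ⟨(x, x), h⟩ t = x)

/-- The monoidal symmetrized topological complexity, as an extended natural number. -/
def TCMSigma (X : Type*) [TopologicalSpace X] : ℕ∞ :=
  sInf {n : ℕ∞ | ∃ k : ℕ, n = k ∧ TCMSigma_le X k}
universe u

/-- A map `p : E → B` of `ℤ/2`-spaces (actions given by involutions) is a `ℤ/2`-fibration
if it has the equivariant homotopy lifting property with respect to all spaces with
involution. -/
def IsEquivFibration {E B : Type u} [TopologicalSpace E] [TopologicalSpace B]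
    (tauE : C(E, E)) (tauB : C(B, B)) (p : C(E, B)) : Prop :=
  ∀ (Y : Type u) [TopologicalSpace Y] (nu : C(Y, Y)), (∀ y, nu (nu y) = y) →
    ∀ (f : C(Y, E)) (H : C(Y × I, B)),
      (∀ y, f (nu y) = tauE (f y)) →
      (∀ (y : Y) (t : I), H (nu y, t) = tauB (H (y, t))) →
      (∀ y, H (y, 0) = p (f y)) →
      ∃ F : C(Y × I, E),
        (∀ y, F (y, 0) = f y) ∧
        (∀ (y : Y) (t : I), p (F (y, t)) = H (y, t)) ∧
        (∀ (y : Y) (t : I), F (nu y, t) = tauE (F (y, t)))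

/-- Path reversal as a continuous self-map of the path space. -/
def pathRevCM (X : Type u) [TopologicalSpace X] : C(PathSp X, PathSp X) :=
  ⟨pathRev, by
    apply ContinuousMap.continuous_precomp⟩

/-- Transposition of coordinates as a continuous self-map of `X × X`. -/
def swapCM (X : Type u) [TopologicalSpace X] : C(X × X, X × X) :=
  ⟨Prod.swap, continuous_swap⟩

/-- The evaluation map as a continuous map. -/
def evalCM (X : Type u) [TopologicalSpace X] : C(PathSp X, X × X) :=
  ⟨evalMap X, by
    apply Continuous.prodMk <;> exact continuous_eval_const _⟩

/-- For any space `X` the evaluation map `π : PX → X × X` is a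
`ℤ/2`-fibration, for the path-reversal and transposition involutions. -/
private lemma symm_projIcc' (a : ℝ) :
    unitInterval.symm (Set.projIcc (0:ℝ) 1 zero_le_one a)
      = Set.projIcc (0:ℝ) 1 zero_le_one (1 - a) := by
  apply Subtype.ext
  simp only [unitInterval.coe_symm_eq, Set.coe_projIcc]
  rcases le_total a 0 with h | h <;> rcases le_total a 1 with h' | h' <;>
    simp [min_def, max_def] <;> split_ifs <;> linarith

theorem evalMap_isEquivFibration (X : Type u) [TopologicalSpace X] :
    IsEquivFibration (pathRevCM X) (swapCM X) (evalCM X) := by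
  intro Y _ nu hnu f H hf hH hH0
  set π : ℝ → I := Set.projIcc (0:ℝ) 1 zero_le_one with hπdef
  have hπc : Continuous π := continuous_projIcc
  have hπv : ∀ u : I, π (u : ℝ) = u := fun u => Set.projIcc_val zero_le_one u
  have hπ0 : π (0:ℝ) = 0 := by
    apply Subtype.ext; rw [hπdef]; show max 0 (min 1 0) = (0:ℝ); norm_num
  have hπ1 : π (1:ℝ) = 1 := by
    apply Subtype.ext; rw [hπdef]; show max 0 (min 1 1) = (1:ℝ); norm_num
  have hd : ∀ t : I, (0:ℝ) < 1 - 2 * (t:ℝ) / 3 := by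
    intro t; have := t.2.2; linarith
  -- three pieces
  set φ₁ : (Y × I) × I → X :=
    fun p => (H (p.1.1, π ((p.1.2 : ℝ) - 3 * (p.2 : ℝ)))).1 with hφ₁def
  set φ₂ : (Y × I) × I → X :=
    fun p => f p.1.1 (π (((p.2:ℝ) - (p.1.2:ℝ)/3) / (1 - 2 * (p.1.2:ℝ) / 3))) with hφ₂def
  set φ₃ : (Y × I) × I → X :=
    fun p => (H (p.1.1, π (3 * (p.2:ℝ) - 3 + (p.1.2:ℝ)))).2 with hφ₃def
  have c1 : Continuous φ₁ := by
    apply Continuous.fst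
    exact H.continuous.comp ((continuous_fst.comp continuous_fst).prodMk
      (hπc.comp (by fun_prop)))
  have c2 : Continuous φ₂ := by
    have := (f.uncurry).continuous
    have harg : Continuous fun p : (Y × I) × I =>
        (((p.2:ℝ) - (p.1.2:ℝ)/3) / (1 - 2 * (p.1.2:ℝ) / 3)) := by
      apply Continuous.div (by fun_prop) (by fun_prop)
      exact fun p => (hd p.1.2).ne'
    exact this.comp ((continuous_fst.comp continuous_fst).prodMk (hπc.comp harg))
  have c3 : Continuous φ₃ := by
    apply Continuous.snd
    exact H.continuous.comp ((continuous_fst.comp continuous_fst).prodMk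
      (hπc.comp (by fun_prop)))
  -- inner piecewise
  set ψ : (Y × I) × I → X :=
    fun p => if (p.2:ℝ) ≤ 1 - (p.1.2:ℝ)/3 then φ₂ p else φ₃ p with hψdef
  have hmid : ∀ p : (Y × I) × I, (p.2:ℝ) = 1 - (p.1.2:ℝ)/3 → φ₂ p = φ₃ p := by
    rintro ⟨⟨y, t⟩, s⟩ h
    simp only [hφ₂def, hφ₃def]
    have h1 : (((s:ℝ) - (t:ℝ)/3) / (1 - 2 * (t:ℝ) / 3)) = 1 := by
      rw [h]
      have h3 : (1 - (t:ℝ)/3 - (t:ℝ)/3) = 1 - 2 * (t:ℝ)/3 := by ring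
      rw [h3, div_self (hd t).ne']
    have h2 : (3 * (s:ℝ) - 3 + (t:ℝ)) = 0 := by rw [h]; ring
    rw [h1, h2, hπ1, hπ0, hH0 y]
    rfl
  have cψ : Continuous ψ := Continuous.if_le c2 c3 (by fun_prop) (by fun_prop) hmid
  have hbd1 : ∀ p : (Y × I) × I, (p.2:ℝ) = (p.1.2:ℝ)/3 → φ₁ p = ψ p := by
    rintro ⟨⟨y, t⟩, s⟩ h
    have ht1 := t.2.2
    have hle : (s:ℝ) ≤ 1 - (t:ℝ)/3 := by rw [h]; linarith
    simp only [hψdef, if_pos hle, hφ₁def, hφ₂def]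
    have h1 : ((t:ℝ) - 3 * (s:ℝ)) = 0 := by rw [h]; ring
    have h2 : (((s:ℝ) - (t:ℝ)/3) / (1 - 2 * (t:ℝ) / 3)) = 0 := by
      rw [h]; simp
    rw [h1, h2, hπ0, hH0 y]
    rfl
  set g : (Y × I) × I → X :=
    fun p => if (p.2:ℝ) ≤ (p.1.2:ℝ)/3 then φ₁ p else ψ p with hgdef
  have cg : Continuous g := Continuous.if_le c1 cψ (by fun_prop) (by fun_prop) hbd1
  set F : C(Y × I, PathSp X) := (ContinuousMap.mk g cg).curry with hFdef
  have hFa : ∀ (a : Y × I) (s : I), F a s = g (a, s) := fun a s => rfl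
  refine ⟨F, ?_, ?_, ?_⟩
  · -- F (y,0) = f y
    intro y
    ext s
    rw [hFa]
    simp only [hgdef, hψdef, hφ₁def, hφ₂def, hφ₃def]
    have hcoe0 : (((0:I)):ℝ) = 0 := rfl
    by_cases h : (s:ℝ) ≤ ((0:I):ℝ)/3
    · rw [if_pos h]
      have hs0 : (s:ℝ) = 0 := le_antisymm (by rw [hcoe0] at h; linarith) s.2.1
      have : ((0:I):ℝ) - 3 * (s:ℝ) = ((0:I):ℝ) := by rw [hs0, hcoe0]; ring
      rw [this, hπv 0, hH0 y]
      show (f y 0, f y 1).1 = f y s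
      have : s = 0 := Subtype.ext hs0
      rw [this]
    · rw [if_neg h]
      have hle : (s:ℝ) ≤ 1 - ((0:I):ℝ)/3 := by rw [hcoe0]; simpa using s.2.2
      rw [if_pos hle]
      have : (((s:ℝ) - ((0:I):ℝ)/3) / (1 - 2 * ((0:I):ℝ) / 3)) = (s:ℝ) := by
        rw [hcoe0]; simp
      rw [this, hπv s]
  · -- eval (F (y,t)) = H (y,t)
    intro y t
    have ht0 := t.2.1; have ht1 := t.2.2
    show ((F (y,t)) 0, (F (y,t)) 1) = H (y, t)
    have e0 : (F (y,t)) 0 = (H (y,t)).1 := by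
      rw [hFa]
      simp only [hgdef, hφ₁def]
      have hc : (((0:I)):ℝ) ≤ (t:ℝ)/3 := by show (0:ℝ) ≤ _; linarith
      rw [if_pos hc]
      have : (t:ℝ) - 3 * ((0:I):ℝ) = (t:ℝ) := by show (t:ℝ) - 3*0 = _; ring
      rw [this, hπv t]
    have e1 : (F (y,t)) 1 = (H (y,t)).2 := by
      rw [hFa]
      simp only [hgdef, hψdef, hφ₂def, hφ₃def]
      have hc1 : (((1:I)):ℝ) = 1 := rfl
      have hnc : ¬ (((1:I)):ℝ) ≤ (t:ℝ)/3 := by rw [hc1]; push_neg; linarith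
      rw [if_neg hnc]
      by_cases h : (((1:I)):ℝ) ≤ 1 - (t:ℝ)/3
      · rw [if_pos h]
        have ht0' : (t:ℝ) = 0 := by rw [hc1] at h; linarith
        have harg : ((((1:I)):ℝ) - (t:ℝ)/3) / (1 - 2 * (t:ℝ) / 3) = 1 := by
          rw [hc1, ht0']; norm_num
        rw [harg, hπ1]
        have : t = 0 := Subtype.ext ht0'
        rw [this, hH0 y]
        rfl
      · rw [if_neg h]
        have : 3 * (((1:I)):ℝ) - 3 + (t:ℝ) = (t:ℝ) := by rw [hc1]; ring
        rw [this, hπv t]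
    rw [e0, e1]
  · -- equivariance
    intro y t
    have ht0 := t.2.1; have ht1 := t.2.2
    ext s
    have hs0 := s.2.1; have hs1 := s.2.2
    show F (nu y, t) s = pathRev (F (y, t)) s
    have hrev : pathRev (F (y, t)) s = F (y, t) (unitInterval.symm s) := rfl
    rw [hrev, hFa, hFa]
    have hσ : ((unitInterval.symm s : I) : ℝ) = 1 - (s:ℝ) := rfl
    have hswap1 : ∀ u : I, (H (nu y, u)).1 = (H (y, u)).2 := by
      intro u; rw [hH y u]; rfl
    have hswap2 : ∀ u : I, (H (nu y, u)).2 = (H (y, u)).1 := by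
      intro u; rw [hH y u]; rfl
    have hfrev : ∀ u : I, f (nu y) u = f y (unitInterval.symm u) := by
      intro u; rw [hf y]; rfl
    simp only [hgdef, hψdef, hφ₁def, hφ₂def, hφ₃def, hσ]
    by_cases hA : (s:ℝ) ≤ (t:ℝ)/3
    · rw [if_pos hA]
      have hnc : ¬ (1 - (s:ℝ) ≤ (t:ℝ)/3) := by push_neg; linarith
      rw [if_neg hnc]
      by_cases hA1 : 1 - (s:ℝ) ≤ 1 - (t:ℝ)/3
      · -- s = t/3
        rw [if_pos hA1]
        have hs : (s:ℝ) = (t:ℝ)/3 := le_antisymm hA (by linarith)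
        have harg1 : (t:ℝ) - 3 * (s:ℝ) = 0 := by rw [hs]; ring
        have harg2 : ((1 - (s:ℝ)) - (t:ℝ)/3) / (1 - 2 * (t:ℝ) / 3) = 1 := by
          rw [hs]
          have h3 : (1 - (t:ℝ)/3 - (t:ℝ)/3) = 1 - 2 * (t:ℝ)/3 := by ring
          rw [h3, div_self (hd t).ne']
        rw [harg1, harg2, hπ0, hπ1, hswap1, hH0 y]
        rfl
      · rw [if_neg hA1]
        have : 3 * (1 - (s:ℝ)) - 3 + (t:ℝ) = (t:ℝ) - 3 * (s:ℝ) := by ring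
        rw [this, hswap1]
    · rw [if_neg hA]
      push_neg at hA
      by_cases hB : (s:ℝ) ≤ 1 - (t:ℝ)/3
      · rw [if_pos hB]
        rw [hfrev, symm_projIcc']
        by_cases hB1 : 1 - (s:ℝ) ≤ (t:ℝ)/3
        · -- s = 1 - t/3
          rw [if_pos hB1]
          have hs : (s:ℝ) = 1 - (t:ℝ)/3 := le_antisymm hB (by linarith)
          have harg1 : 1 - (((s:ℝ) - (t:ℝ)/3) / (1 - 2 * (t:ℝ) / 3)) = 0 := by
            rw [hs]
            have h3 : (1 - (t:ℝ)/3 - (t:ℝ)/3) = 1 - 2 * (t:ℝ)/3 := by ring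
            rw [h3, div_self (hd t).ne']; ring
          have harg2 : (t:ℝ) - 3 * (1 - (s:ℝ)) = 0 := by rw [hs]; ring
          rw [harg1, harg2, ← hπdef, hπ0, hH0 y]
          rfl
        · rw [if_neg hB1]
          have hle : 1 - (s:ℝ) ≤ 1 - (t:ℝ)/3 := by linarith
          rw [if_pos hle]
          have hq : 1 - (((s:ℝ) - (t:ℝ)/3) / (1 - 2 * (t:ℝ) / 3))
              = ((1 - (s:ℝ)) - (t:ℝ)/3) / (1 - 2 * (t:ℝ) / 3) := by
            have h4 : ((1 - (s:ℝ)) - (t:ℝ)/3)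
                = (1 - 2*(t:ℝ)/3) - ((s:ℝ) - (t:ℝ)/3) := by ring
            rw [h4, sub_div (1 - 2*(t:ℝ)/3) ((s:ℝ) - (t:ℝ)/3) (1 - 2*(t:ℝ)/3), div_self (hd t).ne']
          rw [hq, ← hπdef]
      · rw [if_neg hB]
        push_neg at hB
        have hc : 1 - (s:ℝ) ≤ (t:ℝ)/3 := by linarith
        rw [if_pos hc]
        have : (t:ℝ) - 3 * (1 - (s:ℝ)) = 3 * (s:ℝ) - 3 + (t:ℝ) := by ring
        rw [this, hswap2]
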